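/- Let u be inner with u(0) ≠ 0. Define V_u : K_u^⊥ → L^2 by V_u = P^− + (conj(u)/conj(u(0)))·P^+, with inverse V_u^{-1} = P^− + u·conj(u(0))·P^+. Then V_u D_u V_u^{-1} = M_z, the bilateral shift on L^2. In particular, for any inner u, v with u(0) ≠ 0 and v(0) ≠ 0, D_u is similar to D_v. -/

import Mathlib

open MeasureTheory Complex AddCircle

noncomputable section

namespace Paper

/-- The period `2π`. -/
abbrev T : ℝ := 2 * Real.pi

instance : Fact (0 < T) := ⟨by positivity⟩

/-- Normalized Lebesgue (Haar) measure on the circle. -/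
abbrev μ : Measure (AddCircle T) := haarAddCircle

/-- The space `L²(𝕋, dm)`. -/
abbrev L2 : Type := Lp ℂ 2 μ

lemma memLp_mul {u : AddCircle T → ℂ} (hm : AEStronglyMeasurable u μ)
    (hb : ∀ᵐ x ∂μ, ‖u x‖ ≤ 1) (f : L2) :
    MemLp (fun x => u x * (f : AddCircle T → ℂ) x) 2 μ := by
  refine (Lp.memLp f).of_le (hm.mul (Lp.aestronglyMeasurable f)) ?_
  filter_upwards [hb] with x hx
  calc ‖u x * (f : AddCircle T → ℂ) x‖ = ‖u x‖ * ‖(f : AddCircle T → ℂ) x‖ := norm_mul _ _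
    _ ≤ 1 * ‖(f : AddCircle T → ℂ) x‖ := by gcongr
    _ = ‖(f : AddCircle T → ℂ) x‖ := one_mul _

/-- Multiplication by a measurable function bounded by `1`, as a bounded operator on `L²`. -/
def mulCLM (u : AddCircle T → ℂ) (hm : AEStronglyMeasurable u μ)
    (hb : ∀ᵐ x ∂μ, ‖u x‖ ≤ 1) : L2 →L[ℂ] L2 :=
  LinearMap.mkContinuous
    { toFun := fun f => (memLp_mul hm hb f).toLp _
      map_add' := fun f g => by
        show MemLp.toLp _ (memLp_mul hm hb (f + g)) = _
        have h : (fun x => u x * ((f + g : L2) : AddCircle T → ℂ) x)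
            =ᵐ[μ] (fun x => u x * (f : AddCircle T → ℂ) x)
              + (fun x => u x * (g : AddCircle T → ℂ) x) := by
          filter_upwards [Lp.coeFn_add f g] with x hx
          simp only [Pi.add_apply, hx, mul_add]
        rw [MemLp.toLp_congr (memLp_mul hm hb (f + g))
          ((memLp_mul hm hb f).add (memLp_mul hm hb g)) h, MemLp.toLp_add]
      map_smul' := fun c f => by
        have h : (fun x => u x * ((c • f : L2) : AddCircle T → ℂ) x)
            =ᵐ[μ] c • (fun x => u x * (f : AddCircle T → ℂ) x) := by
          filter_upwards [Lp.coeFn_smul c f] with x hx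
          simp only [Pi.smul_apply, hx, smul_eq_mul]
          ring
        simp only [RingHom.id_apply]
        rw [MemLp.toLp_congr (memLp_mul hm hb (c • f))
          ((memLp_mul hm hb f).const_smul c) h, MemLp.toLp_const_smul] }
    1
    (fun f => by
      simp only [LinearMap.coe_mk, AddHom.coe_mk, one_mul]
      rw [Lp.norm_toLp]
      have h1 : eLpNorm (fun x => u x * (f : AddCircle T → ℂ) x) 2 μ
          ≤ eLpNorm (f : AddCircle T → ℂ) 2 μ := by
        refine eLpNorm_mono_ae ?_
        filter_upwards [hb] with x hx
        calc ‖u x * (f : AddCircle T → ℂ) x‖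
            = ‖u x‖ * ‖(f : AddCircle T → ℂ) x‖ := norm_mul _ _
          _ ≤ 1 * ‖(f : AddCircle T → ℂ) x‖ := by gcongr
          _ = ‖(f : AddCircle T → ℂ) x‖ := one_mul _
      calc (eLpNorm (fun x => u x * (f : AddCircle T → ℂ) x) 2 μ).toReal
          ≤ (eLpNorm (f : AddCircle T → ℂ) 2 μ).toReal :=
            ENNReal.toReal_mono (Lp.eLpNorm_ne_top f) h1
        _ = ‖f‖ := (Lp.norm_def f).symm)

lemma memLp_conj (f : L2) :
    MemLp (fun x => (starRingEnd ℂ) ((f : AddCircle T → ℂ) x)) 2 μ := by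
  refine (Lp.memLp f).of_le ?_ ?_
  · exact Complex.continuous_conj.comp_aestronglyMeasurable (Lp.aestronglyMeasurable f)
  · filter_upwards with x
    simp

/-- Complex conjugation on `L²`. -/
def conjL2 (f : L2) : L2 := (memLp_conj f).toLp _

/-- The independent variable `z = e^{iθ}` as a function on the circle. -/
def zfun : AddCircle T → ℂ := fun x => fourier 1 x

lemma zfun_meas : AEStronglyMeasurable zfun μ :=
  ((map_continuous (fourier (T := T) 1)).aestronglyMeasurable)

lemma zfun_norm : ∀ᵐ x ∂μ, ‖zfun x‖ ≤ 1 := by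
  filter_upwards with x
  simp [zfun, Circle.norm_coe]

/-- Multiplication by `z` (the bilateral shift `M` on `L²`). -/
def Mz : L2 →L[ℂ] L2 := mulCLM zfun zfun_meas zfun_norm

/-- Multiplication by `conj z`. -/
def Mzbar : L2 →L[ℂ] L2 :=
  mulCLM (fun x => (starRingEnd ℂ) (zfun x))
    (Complex.continuous_conj.comp_aestronglyMeasurable zfun_meas)
    (by filter_upwards with x; simp [zfun, Circle.norm_coe])

/-- The Hardy space `H² = {f ∈ L² : f̂(n) = 0 for all n < 0}`. -/
def H2 : Submodule ℂ L2 where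
  carrier := {f | ∀ n : ℤ, n < 0 → fourierBasis.repr f n = 0}
  add_mem' := by
    intro f g hf hg n hn
    simp [map_add, hf n hn, hg n hn]
  zero_mem' := by intro n hn; simp
  smul_mem' := by
    intro c f hf n hn
    simp [_root_.map_smul, hf n hn]

lemma continuous_coeff (n : ℤ) :
    Continuous fun f : L2 => fourierBasis.repr f n := by
  rw [Metric.continuous_iff]
  intro f ε hε
  refine ⟨ε, hε, fun g hg => ?_⟩
  have h1 : fourierBasis.repr g n - fourierBasis.repr f n = fourierBasis.repr (g - f) n := by
    simp [map_sub]
  have h2 : ‖fourierBasis.repr (g - f) n‖ ≤ ‖fourierBasis.repr (g - f)‖ :=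
    lp.norm_apply_le_norm (by norm_num) _ n
  have h3 : ‖fourierBasis.repr (g - f)‖ = ‖g - f‖ :=
    fourierBasis.repr.norm_map _
  calc dist (fourierBasis.repr g n) (fourierBasis.repr f n)
      = ‖fourierBasis.repr (g - f) n‖ := by rw [dist_eq_norm, h1]
    _ ≤ ‖g - f‖ := by rw [← h3]; exact h2
    _ = dist g f := (dist_eq_norm g f).symm
    _ < ε := hg

lemma H2_isClosed : IsClosed (H2 : Set L2) := by
  have : (H2 : Set L2) =
      ⋂ n ∈ {m : ℤ | m < 0}, {f : L2 | fourierBasis.repr f n = 0} := by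
    ext f
    simp only [Set.mem_iInter, Set.mem_setOf_eq]
    rfl
  rw [this]
  exact isClosed_biInter fun n _ => isClosed_eq (continuous_coeff n) continuous_const

instance : CompleteSpace H2 := H2_isClosed.completeSpace_coe

/-- The Riesz projection `P⁺` of `L²` onto `H²`. -/
def Pp : L2 →L[ℂ] L2 := H2.subtypeL ∘L H2.orthogonalProjectionOnto

/-- The projection `P⁻ = I − P⁺` of `L²` onto `conj(H²₀)`. -/
def Pm : L2 →L[ℂ] L2 := ContinuousLinearMap.id ℂ L2 - Pp

/-- `conj(H²₀) = {f ∈ L² : f̂(n) = 0 for all n ≥ 0}`, the orthogonal complement of `H²`. -/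
def Hm : Submodule ℂ L2 where
  carrier := {f | ∀ n : ℤ, 0 ≤ n → fourierBasis.repr f n = 0}
  add_mem' := by
    intro f g hf hg n hn
    simp [map_add, hf n hn, hg n hn]
  zero_mem' := by intro n hn; simp
  smul_mem' := by
    intro c f hf n hn
    simp [_root_.map_smul, hf n hn]

/-- The constant function `1` as an element of `L²`. -/
def oneL2 : L2 := (memLp_const (1 : ℂ)).toLp _

/-- An inner function: a bounded measurable unimodular function on the circle whose
negative Fourier coefficients vanish. -/
structure InnerData where
  u : AddCircle T → ℂ
  meas : AEStronglyMeasurable u μ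
  unim : ∀ᵐ x ∂μ, ‖u x‖ = 1
  anal : ∀ n : ℤ, n < 0 → fourierCoeff u n = 0

namespace InnerData

variable (U : InnerData)

lemma bd : ∀ᵐ x ∂μ, ‖U.u x‖ ≤ 1 := by
  filter_upwards [U.unim] with x hx
  rw [hx]

/-- Multiplication by `u`: the operator `M_u` on `L²`. -/
def M : L2 →L[ℂ] L2 := mulCLM U.u U.meas U.bd

/-- Multiplication by `conj u`: the operator `M_{conj u}` on `L²`. -/
def Mc : L2 →L[ℂ] L2 :=
  mulCLM (fun x => (starRingEnd ℂ) (U.u x))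
    (Complex.continuous_conj.comp_aestronglyMeasurable U.meas)
    (by filter_upwards [U.bd] with x hx; simpa using hx)

/-- `u` as an element of `L²`. -/
def toL2 : L2 :=
  (memLp_top_of_bound U.meas 1 U.bd |>.mono_exponent le_top).toLp _

/-- The value `u(0)` of (the analytic extension of) `u` at the origin, i.e. the mean of `u`. -/
def a0 : ℂ := fourierCoeff U.u 0

/-- The subspace `uH²`. -/
def uH2 : Submodule ℂ L2 := Submodule.map (U.M : L2 →ₗ[ℂ] L2) H2

/-- The model space `K_u = H² ∩ (uH²)ᗮ`. -/
def Ku : Submodule ℂ L2 := H2 ⊓ (U.uH2)ᗮ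

lemma Ku_isClosed : IsClosed (U.Ku : Set L2) := by
  have : (U.Ku : Set L2) = (H2 : Set L2) ∩ ((U.uH2)ᗮ : Set L2) := rfl
  rw [this]
  exact H2_isClosed.inter (U.uH2).isClosed_orthogonal

instance : CompleteSpace U.Ku := U.Ku_isClosed.completeSpace_coe

/-- `K_u^⊥`, the orthogonal complement of the model space in `L²`. -/
def KP : Submodule ℂ L2 := (U.Ku)ᗮ

instance : CompleteSpace U.KP := (U.Ku).isClosed_orthogonal.completeSpace_coe

/-- The orthogonal projection `P_u : L² → K_u` (viewed as an operator on `L²`). -/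
def Pu : L2 →L[ℂ] L2 := (U.Ku).subtypeL ∘L (U.Ku).orthogonalProjectionOnto

/-- The dual of the compressed shift: `D_u = (I − P_u) M_z |_{K_u^⊥}`. -/
def Du : U.KP →L[ℂ] U.KP :=
  (U.KP).orthogonalProjectionOnto ∘L Mz ∘L (U.KP).subtypeL

/-- The conjugation `C_u f = u · conj(z f)` on `L²`. -/
def C (f : L2) : L2 := U.M (conjL2 (Mz f))

/-- The reproducing kernel of `K_u` at `0`: `k₀ᵘ = 1 − conj(u(0))·u`. -/
def k0 : L2 := oneL2 - (starRingEnd ℂ) U.a0 • U.toL2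

/-- The similarity `V_u = P⁻ + (conj u/conj u(0)) P⁺` of the paper. -/
def V : L2 →L[ℂ] L2 := Pm + ((starRingEnd ℂ) U.a0)⁻¹ • (U.Mc ∘L Pp)

/-- The inverse similarity `V_u⁻¹ = P⁻ + conj(u(0)) u P⁺`. -/
def Vinv : L2 →L[ℂ] L2 := Pm + (starRingEnd ℂ) U.a0 • (U.M ∘L Pp)

end InnerData

lemma Mz_mem_H2 {f : L2} (hf : f ∈ H2) : Mz f ∈ H2 := by
  intro n hn
  rw [fourierBasis_repr]
  have hcoe : (Mz f : AddCircle T → ℂ) =ᵐ[μ] fun x => zfun x * (f : AddCircle T → ℂ) x :=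
    MemLp.coeFn_toLp (memLp_mul zfun_meas zfun_norm f)
  have h1 : fourierCoeff (Mz f : AddCircle T → ℂ) n
      = fourierCoeff (f : AddCircle T → ℂ) (n - 1) := by
    unfold fourierCoeff
    rw [integral_congr_ae (by filter_upwards [hcoe] with x hx; rw [hx])]
    refine integral_congr_ae ?_
    filter_upwards with x
    have : fourier (-n) x * zfun x = fourier (-(n - 1)) x := by
      unfold zfun
      rw [show (-(n - 1) : ℤ) = -n + 1 by ring, fourier_add]
    simp only [smul_eq_mul]
    calc fourier (-n) x * (zfun x * (f : AddCircle T → ℂ) x)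
        = (fourier (-n) x * zfun x) * (f : AddCircle T → ℂ) x := by ring
      _ = fourier (-(n - 1)) x * (f : AddCircle T → ℂ) x := by rw [this]
  rw [h1]
  have := hf (n - 1) (by omega)
  rwa [fourierBasis_repr] at this

/-- The unilateral shift `S` on `H²`. -/
def Shift : H2 →L[ℂ] H2 :=
  (Mz ∘L H2.subtypeL).codRestrict H2 (fun x => Mz_mem_H2 x.2)

section Aux

local notation "⟪" x ", " y "⟫" => @inner ℂ _ _ x y

lemma coeff_ext {f g : L2} (h : ∀ n : ℤ, fourierBasis.repr f n = fourierBasis.repr g n) :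
    f = g := by
  have : fourierBasis.repr f = fourierBasis.repr g := lp.ext (funext h)
  exact fourierBasis.repr.injective this

lemma inner_eq_zero_of_coeff {f g : L2}
    (h : ∀ n : ℤ, fourierBasis.repr f n = 0 ∨ fourierBasis.repr g n = 0) :
    ⟪f, g⟫ = 0 := by
  rw [← fourierBasis.repr.inner_map_map f g, lp.inner_eq_tsum]
  convert tsum_zero with n
  rcases h n with h | h <;> simp [h]

lemma inner_H2_Hm {f g : L2} (hf : f ∈ H2) (hg : g ∈ Hm) : ⟪f, g⟫ = 0 :=
  inner_eq_zero_of_coeff fun n => by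
    rcases lt_or_ge n 0 with hn | hn
    · exact Or.inl (hf n hn)
    · exact Or.inr (hg n hn)

lemma inner_Hm_H2 {f g : L2} (hf : f ∈ Hm) (hg : g ∈ H2) : ⟪f, g⟫ = 0 :=
  inner_eq_zero_of_coeff fun n => by
    rcases lt_or_ge n 0 with hn | hn
    · exact Or.inr (hg n hn)
    · exact Or.inl (hf n hn)

lemma fourierBasis_mem_H2 {n : ℤ} (hn : 0 ≤ n) : (fourierBasis (T := T) n : L2) ∈ H2 := by
  intro m hm
  rw [fourierBasis.repr_self, lp.single_apply, Pi.single_apply, if_neg (by omega : m ≠ n)]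

lemma Pp_coe (f : L2) : Pp f = (H2.orthogonalProjectionOnto f : L2) := rfl

lemma Pp_mem (f : L2) : Pp f ∈ H2 := by rw [Pp_coe]; exact SetLike.coe_mem _

lemma Pm_apply (f : L2) : Pm f = f - Pp f := rfl

lemma Pm_mem (f : L2) : Pm f ∈ Hm := by
  intro n hn
  have horth : f - (H2.orthogonalProjectionOnto f : L2) ∈ H2ᗮ :=
    H2.sub_starProjection_mem_orthogonal f
  have h0 := (Submodule.mem_orthogonal H2 _).1 horth _ (fourierBasis_mem_H2 hn)
  rw [Pm_apply, Pp_coe, fourierBasis.repr_apply_apply]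
  exact h0

lemma H2_inf_Hm {f : L2} (h2 : f ∈ H2) (hm : f ∈ Hm) : f = 0 :=
  coeff_ext fun n => by
    rcases lt_or_ge n 0 with hn | hn
    · simp [h2 n hn]
    · simp [hm n hn]

lemma Pp_eq {f b : L2} (hb : b ∈ H2) (hd : f - b ∈ Hm) : Pp f = b := by
  have h1 : Pp f - b ∈ H2 := H2.sub_mem (Pp_mem f) hb
  have h2 : Pp f - b ∈ Hm := by
    have he : Pp f - b = (f - b) - Pm f := by rw [Pm_apply]; abel
    rw [he]; exact Hm.sub_mem hd (Pm_mem f)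
  have := H2_inf_Hm h1 h2
  rwa [sub_eq_zero] at this

lemma Pm_eq {f b : L2} (hb : b ∈ H2) (hd : f - b ∈ Hm) : Pm f = f - b := by
  rw [Pm_apply, Pp_eq hb hd]

lemma fourierCoeff_congr {f g : AddCircle T → ℂ} (h : f =ᵐ[μ] g) (n : ℤ) :
    fourierCoeff f n = fourierCoeff g n := by
  unfold fourierCoeff
  exact integral_congr_ae (by filter_upwards [h] with x hx; rw [hx])

lemma fourierCoeff_fourier_mul (g : AddCircle T → ℂ) (m n : ℤ) :
    fourierCoeff (fun x => fourier m x * g x) n = fourierCoeff g (n - m) := by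
  unfold fourierCoeff
  refine integral_congr_ae (Filter.Eventually.of_forall fun x => ?_)
  simp only [smul_eq_mul]
  rw [← mul_assoc, ← fourier_add, show (-n + m : ℤ) = -(n - m) by ring]

lemma fourierCoeff_conj (g : AddCircle T → ℂ) (n : ℤ) :
    fourierCoeff (fun x => (starRingEnd ℂ) (g x)) n = (starRingEnd ℂ) (fourierCoeff g (-n)) := by
  unfold fourierCoeff
  rw [← integral_conj]
  refine integral_congr_ae (Filter.Eventually.of_forall fun x => ?_)
  simp only [smul_eq_mul, map_mul, neg_neg]
  rw [← fourier_neg]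

lemma coeff_toLp {f : AddCircle T → ℂ} (hf : MemLp f 2 μ) (n : ℤ) :
    fourierBasis.repr (hf.toLp f) n = fourierCoeff f n := by
  rw [fourierBasis_repr]
  exact fourierCoeff_congr hf.coeFn_toLp n

lemma coeFn_mulCLM {u : AddCircle T → ℂ} (hm : AEStronglyMeasurable u μ)
    (hb : ∀ᵐ x ∂μ, ‖u x‖ ≤ 1) (f : L2) :
    (mulCLM u hm hb f : AddCircle T → ℂ) =ᵐ[μ] fun x => u x * (f : AddCircle T → ℂ) x :=
  (memLp_mul hm hb f).coeFn_toLp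

lemma coeff_mulCLM {u : AddCircle T → ℂ} (hm : AEStronglyMeasurable u μ)
    (hb : ∀ᵐ x ∂μ, ‖u x‖ ≤ 1) (f : L2) (n : ℤ) :
    fourierBasis.repr (mulCLM u hm hb f) n
      = fourierCoeff (fun x => u x * (f : AddCircle T → ℂ) x) n :=
  coeff_toLp (memLp_mul hm hb f) n

lemma coeff_Mz (f : L2) (n : ℤ) :
    fourierBasis.repr (Mz f) n = fourierBasis.repr f (n - 1) := by
  rw [show Mz f = mulCLM zfun zfun_meas zfun_norm f from rfl, coeff_mulCLM, fourierBasis_repr]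
  exact fourierCoeff_fourier_mul _ 1 n

lemma coeFn_Mz (f : L2) :
    (Mz f : AddCircle T → ℂ) =ᵐ[μ] fun x => fourier 1 x * (f : AddCircle T → ℂ) x :=
  coeFn_mulCLM zfun_meas zfun_norm f

lemma coeFn_conjL2 (f : L2) :
    (conjL2 f : AddCircle T → ℂ) =ᵐ[μ] fun x => (starRingEnd ℂ) ((f : AddCircle T → ℂ) x) :=
  (memLp_conj f).coeFn_toLp

lemma coeff_conjL2 (f : L2) (n : ℤ) :
    fourierBasis.repr (conjL2 f) n = (starRingEnd ℂ) (fourierBasis.repr f (-n)) := by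
  rw [show conjL2 f = (memLp_conj f).toLp _ from rfl, coeff_toLp, fourierCoeff_conj,
    fourierBasis_repr]

lemma coeFn_oneL2 : (oneL2 : AddCircle T → ℂ) =ᵐ[μ] fun _ => (1 : ℂ) :=
  (memLp_const (1 : ℂ)).coeFn_toLp

lemma oneL2_eq_basis : oneL2 = fourierBasis (T := T) 0 := by
  have h1 : fourierBasis (T := T) 0 = fourierLp 2 0 := by
    rw [← coe_fourierBasis]
  refine Lp.ext ?_
  rw [h1]
  filter_upwards [coeFn_oneL2, coeFn_fourierLp 2 0] with x h2 h3
  rw [h2, h3, fourier_zero]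

lemma coeff_oneL2 (n : ℤ) :
    fourierBasis.repr oneL2 n = if n = 0 then 1 else 0 := by
  rw [oneL2_eq_basis, fourierBasis.repr_self, lp.single_apply, Pi.single_apply]

lemma coeff_sub (f g : L2) (n : ℤ) :
    fourierBasis.repr (f - g) n = fourierBasis.repr f n - fourierBasis.repr g n := by
  rw [map_sub]; rfl

lemma coeff_smul (c : ℂ) (f : L2) (n : ℤ) :
    fourierBasis.repr (c • f) n = c * fourierBasis.repr f n := by
  rw [_root_.map_smul]; rfl

lemma oneL2_mem_H2 : oneL2 ∈ H2 := fun n hn => by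
  rw [coeff_oneL2, if_neg (by omega)]

end Aux

namespace InnerData

variable (U : InnerData)

local notation "⟪" x ", " y "⟫" => @inner ℂ _ _ x y

lemma coeFn_M (f : L2) :
    (U.M f : AddCircle T → ℂ) =ᵐ[μ] fun x => U.u x * (f : AddCircle T → ℂ) x :=
  coeFn_mulCLM U.meas U.bd f

lemma coeFn_Mc (f : L2) :
    (U.Mc f : AddCircle T → ℂ)
      =ᵐ[μ] fun x => (starRingEnd ℂ) (U.u x) * (f : AddCircle T → ℂ) x :=
  coeFn_mulCLM _ _ f

lemma conj_mul_self : ∀ᵐ x ∂μ, (starRingEnd ℂ) (U.u x) * U.u x = 1 := by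
  filter_upwards [U.unim] with x hx
  have : U.u x * (starRingEnd ℂ) (U.u x) = ((‖U.u x‖ : ℝ) : ℂ) ^ 2 := by
    rw [Complex.mul_conj, Complex.normSq_eq_norm_sq]
    push_cast
    ring
  rw [mul_comm, this, hx]
  norm_num

lemma Mc_M (f : L2) : U.Mc (U.M f) = f := by
  refine Lp.ext ?_
  filter_upwards [U.coeFn_Mc (U.M f), U.coeFn_M f, U.conj_mul_self] with x h1 h2 h3
  rw [h1, h2, ← mul_assoc, h3, one_mul]

lemma M_Mc (f : L2) : U.M (U.Mc f) = f := by
  refine Lp.ext ?_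
  filter_upwards [U.coeFn_M (U.Mc f), U.coeFn_Mc f, U.conj_mul_self] with x h1 h2 h3
  rw [h1, h2, ← mul_assoc, mul_comm (U.u x), h3, one_mul]

lemma inner_M_right (f g : L2) : ⟪f, U.M g⟫ = ⟪U.Mc f, g⟫ := by
  rw [MeasureTheory.L2.inner_def, MeasureTheory.L2.inner_def]
  refine integral_congr_ae ?_
  filter_upwards [U.coeFn_M g, U.coeFn_Mc f] with x h1 h2
  rw [h1, h2, RCLike.inner_apply, RCLike.inner_apply, map_mul, Complex.conj_conj]
  ring

lemma inner_M_left (f g : L2) : ⟪U.M f, g⟫ = ⟪f, U.Mc g⟫ := by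
  rw [← inner_conj_symm (U.M f) g, U.inner_M_right, inner_conj_symm]

lemma coeff_Mc_basis (n m : ℤ) :
    fourierBasis.repr (U.Mc (fourierBasis (T := T) n)) m
      = (starRingEnd ℂ) (fourierCoeff U.u (n - m)) := by
  rw [show U.Mc (fourierBasis (T := T) n)
      = mulCLM _ (Complex.continuous_conj.comp_aestronglyMeasurable U.meas)
        (by filter_upwards [U.bd] with x hx; simpa using hx) (fourierBasis (T := T) n)
    from rfl]
  refine (coeff_mulCLM _ _ _ _).trans ?_
  have hb : fourierBasis (T := T) n = fourierLp 2 n := by rw [← coe_fourierBasis]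
  have h1 : (fun x => (starRingEnd ℂ) (U.u x)
        * ((fourierBasis (T := T) n : L2) : AddCircle T → ℂ) x)
      =ᵐ[μ] fun x => (starRingEnd ℂ) (U.u x * fourier (-n) x) := by
    rw [hb]
    filter_upwards [coeFn_fourierLp 2 n] with x hx
    rw [hx, map_mul, fourier_neg, Complex.conj_conj]
  rw [fourierCoeff_congr h1, fourierCoeff_conj]
  congr 1
  rw [fourierCoeff_congr (g := fun x => fourier (-n) x * U.u x)
    (Filter.Eventually.of_forall fun x => mul_comm _ _), fourierCoeff_fourier_mul]
  congr 1
  ring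

lemma M_mem_H2 {h : L2} (hh : h ∈ H2) : U.M h ∈ H2 := by
  intro n hn
  rw [show fourierBasis.repr (U.M h) n = ⟪fourierBasis (T := T) n, U.M h⟫ from
    fourierBasis.repr_apply_apply _ _, U.inner_M_right]
  refine inner_eq_zero_of_coeff fun m => ?_
  rcases lt_or_ge m 0 with hm | hm
  · exact Or.inr (hh m hm)
  · left
    rw [U.coeff_Mc_basis, U.anal (n - m) (by omega), map_zero]

lemma M_norm (f : L2) : ‖U.M f‖ = ‖f‖ := by
  rw [Lp.norm_def, Lp.norm_def, eLpNorm_congr_ae (U.coeFn_M f)]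
  congr 1
  refine eLpNorm_congr_norm_ae ?_
  filter_upwards [U.unim] with x hx
  rw [norm_mul, hx, one_mul]

lemma uH2_isComplete : IsComplete (U.uH2 : Set L2) := by
  have hiso : Isometry (⇑U.M) :=
    AddMonoidHomClass.isometry_of_norm _ U.M_norm
  have hset : (U.uH2 : Set L2) = ⇑U.M '' (H2 : Set L2) := by
    ext v
    simp [uH2, Submodule.map_coe]
  rw [hset]
  exact (isComplete_image_iff hiso.isUniformInducing).2 H2_isClosed.isComplete

instance : CompleteSpace U.uH2 := U.uH2_isComplete.completeSpace_coe

lemma Hm_le_KP {m : L2} (hm : m ∈ Hm) : m ∈ U.KP :=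
  (Submodule.mem_orthogonal _ _).2 fun k hk => inner_H2_Hm hk.1 hm

lemma uH2_le_H2 {v : L2} (hv : v ∈ U.uH2) : v ∈ H2 := by
  obtain ⟨h, hh, rfl⟩ := hv
  exact U.M_mem_H2 hh

lemma uH2_le_KP {v : L2} (hv : v ∈ U.uH2) : v ∈ U.KP :=
  (Submodule.mem_orthogonal _ _).2 fun k hk => by
    have h1 : ⟪v, k⟫ = 0 := (Submodule.mem_orthogonal _ _).1 hk.2 v hv
    rw [← inner_conj_symm, h1, map_zero]

lemma coeFn_toL2 : (U.toL2 : AddCircle T → ℂ) =ᵐ[μ] U.u := MemLp.coeFn_toLp _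

lemma coeff_toL2 (n : ℤ) : fourierBasis.repr U.toL2 n = fourierCoeff U.u n :=
  coeff_toLp _ n

lemma toL2_mem_H2 : U.toL2 ∈ H2 := fun n hn => by
  rw [U.coeff_toL2]; exact U.anal n hn

lemma toL2_eq_M_one : U.toL2 = U.M oneL2 := by
  refine Lp.ext ?_
  filter_upwards [U.coeFn_toL2, U.coeFn_M oneL2, coeFn_oneL2] with x h1 h2 h3
  rw [h1, h2, h3, mul_one]

lemma toL2_mem_uH2 : U.toL2 ∈ U.uH2 := by
  rw [U.toL2_eq_M_one]
  exact ⟨oneL2, oneL2_mem_H2, rfl⟩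

lemma Mc_toL2 : U.Mc U.toL2 = oneL2 := by
  refine Lp.ext ?_
  filter_upwards [U.coeFn_Mc U.toL2, U.coeFn_toL2, coeFn_oneL2, U.conj_mul_self]
    with x h1 h2 h3 h4
  rw [h1, h2, h3, h4]

lemma coeFn_k0 :
    (U.k0 : AddCircle T → ℂ) =ᵐ[μ] fun x => 1 - (starRingEnd ℂ) U.a0 * U.u x := by
  have := Lp.coeFn_sub oneL2 ((starRingEnd ℂ) U.a0 • U.toL2)
  filter_upwards [this, coeFn_oneL2, Lp.coeFn_smul ((starRingEnd ℂ) U.a0) U.toL2,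
    U.coeFn_toL2] with x h1 h2 h3 h4
  rw [show (U.k0 : AddCircle T → ℂ) x
    = ((oneL2 - (starRingEnd ℂ) U.a0 • U.toL2 : L2) : AddCircle T → ℂ) x from rfl, h1]
  simp only [Pi.sub_apply, h2, h3, Pi.smul_apply, h4, smul_eq_mul]

lemma Mc_k0 : U.Mc U.k0 = conjL2 U.toL2 - (starRingEnd ℂ) U.a0 • oneL2 := by
  refine Lp.ext ?_
  have h5 := Lp.coeFn_sub (conjL2 U.toL2) ((starRingEnd ℂ) U.a0 • oneL2)
  filter_upwards [U.coeFn_Mc U.k0, U.coeFn_k0, U.conj_mul_self, h5, coeFn_conjL2 U.toL2,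
    U.coeFn_toL2, Lp.coeFn_smul ((starRingEnd ℂ) U.a0) oneL2, coeFn_oneL2]
    with x h1 h2 h3 h4 h6 h7 h8 h9
  rw [h1, h2, h4]
  simp only [Pi.sub_apply, h6, h7, h8, Pi.smul_apply, h9, smul_eq_mul]
  rw [mul_sub, mul_one, mul_one]
  congr 1
  rw [mul_comm ((starRingEnd ℂ) U.a0), ← mul_assoc, h3, one_mul]

lemma Mc_k0_mem_Hm : U.Mc U.k0 ∈ Hm := by
  intro n hn
  rw [U.Mc_k0, coeff_sub, coeff_smul, coeff_conjL2, U.coeff_toL2, coeff_oneL2]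
  rcases eq_or_lt_of_le hn with h | h
  · rw [← h]
    simp [a0]
  · rw [U.anal (-n) (by omega), if_neg (by omega), map_zero, mul_zero, sub_zero]

lemma k0_mem_Ku : U.k0 ∈ U.Ku := by
  constructor
  · exact H2.sub_mem oneL2_mem_H2 (H2.smul_mem _ U.toL2_mem_H2)
  · refine (Submodule.mem_orthogonal _ _).2 ?_
    rintro v ⟨h, hh, rfl⟩
    show ⟪U.M h, U.k0⟫ = 0
    rw [U.inner_M_left]
    exact inner_H2_Hm hh U.Mc_k0_mem_Hm

lemma exists_decomp {f : L2} (hf : f ∈ U.KP) : ∃ h, h ∈ H2 ∧ Pp f = U.M h := by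
  have hPm_KP : Pm f ∈ U.KP := U.Hm_le_KP (Pm_mem f)
  have hPp_KP : Pp f ∈ U.KP := by
    have : Pp f = f - Pm f := by rw [Pm_apply]; abel
    rw [this]
    exact U.KP.sub_mem hf hPm_KP
  set g := Pp f with hg
  set p : L2 := (U.uH2.orthogonalProjectionOnto g : L2) with hp_def
  have hp : p ∈ U.uH2 := SetLike.coe_mem _
  have hq : g - p ∈ (U.uH2)ᗮ := U.uH2.sub_starProjection_mem_orthogonal g
  have hqKu : g - p ∈ U.Ku := ⟨H2.sub_mem (Pp_mem f) (U.uH2_le_H2 hp), hq⟩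
  have h1 : ⟪g - p, g⟫ = 0 := (Submodule.mem_orthogonal _ _).1 hPp_KP _ hqKu
  have h2 : ⟪g - p, p⟫ = 0 := by
    have := (Submodule.mem_orthogonal _ _).1 hq p hp
    rw [← inner_conj_symm, this, map_zero]
  have h3 : ⟪g - p, g - p⟫ = (0 : ℂ) := by
    rw [inner_sub_right, h1, h2, sub_zero]
  have h4 : g - p = 0 := inner_self_eq_zero.1 h3
  have h5 : g ∈ U.uH2 := by
    have : g = p := by rwa [sub_eq_zero] at h4
    rw [this]; exact hp
  obtain ⟨h, hh, hMh⟩ := h5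
  exact ⟨h, hh, hMh.symm⟩

lemma V_apply (g : L2) :
    U.V g = Pm g + ((starRingEnd ℂ) U.a0)⁻¹ • U.Mc (Pp g) := by
  simp [V, ContinuousLinearMap.add_apply, ContinuousLinearMap.smul_apply,
    ContinuousLinearMap.comp_apply]

lemma Vinv_apply (g : L2) :
    U.Vinv g = Pm g + (starRingEnd ℂ) U.a0 • U.M (Pp g) := by
  simp [Vinv, ContinuousLinearMap.add_apply, ContinuousLinearMap.smul_apply,
    ContinuousLinearMap.comp_apply]

lemma claim1 (h0 : U.a0 ≠ 0) {f : L2} (hf : f ∈ U.KP) : U.Vinv (U.V f) = f := by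
  have hbar : (starRingEnd ℂ) U.a0 ≠ 0 := by simpa using h0
  obtain ⟨h, hh, hPf⟩ := U.exists_decomp hf
  have hMc : U.Mc (Pp f) = h := by rw [hPf, U.Mc_M]
  have hV : U.V f = Pm f + ((starRingEnd ℂ) U.a0)⁻¹ • h := by rw [U.V_apply, hMc]
  have hPpV : Pp (U.V f) = ((starRingEnd ℂ) U.a0)⁻¹ • h := by
    refine Pp_eq (H2.smul_mem _ hh) ?_
    rw [hV, add_sub_cancel_right]
    exact Pm_mem f
  have hPmV : Pm (U.V f) = Pm f := by
    rw [Pm_apply, hPpV, hV, add_sub_cancel_right]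
  rw [U.Vinv_apply, hPmV, hPpV, _root_.map_smul, smul_smul, mul_inv_cancel₀ hbar, one_smul, ← hPf,
    Pm_apply]
  abel

lemma claim2a (h0 : U.a0 ≠ 0) (g : L2) : U.V (U.Vinv g) = g := by
  have hbar : (starRingEnd ℂ) U.a0 ≠ 0 := by simpa using h0
  have hMH2 : U.M (Pp g) ∈ H2 := U.M_mem_H2 (Pp_mem g)
  have hPp : Pp (U.Vinv g) = (starRingEnd ℂ) U.a0 • U.M (Pp g) := by
    refine Pp_eq (H2.smul_mem _ hMH2) ?_
    rw [U.Vinv_apply, add_sub_cancel_right]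
    exact Pm_mem g
  have hPm : Pm (U.Vinv g) = Pm g := by
    rw [Pm_apply, hPp, U.Vinv_apply, add_sub_cancel_right]
  rw [U.V_apply, hPm, hPp, _root_.map_smul, U.Mc_M, smul_smul, inv_mul_cancel₀ hbar, one_smul,
    Pm_apply]
  abel

lemma claim2b (g : L2) : U.Vinv g ∈ U.KP := by
  rw [U.Vinv_apply]
  exact U.KP.add_mem (U.Hm_le_KP (Pm_mem g))
    (U.KP.smul_mem _ (U.uH2_le_KP ⟨Pp g, Pp_mem g, rfl⟩))

lemma claim3' (h0 : U.a0 ≠ 0) {f : L2} (hf : f ∈ U.KP) :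
    U.V ((U.KP.orthogonalProjectionOnto (Mz f) : L2)) = Mz (U.V f) := by
  have hbar : (starRingEnd ℂ) U.a0 ≠ 0 := by simpa using h0
  obtain ⟨h, hh, hPf⟩ := U.exists_decomp hf
  set m : L2 := Pm f with hm_def
  have hm : m ∈ Hm := Pm_mem f
  set c : ℂ := fourierBasis.repr m (-1) with hc
  have hf_dec : f = m + U.M h := by
    rw [hm_def, Pm_apply, ← hPf]; abel
  have hm' : Mz m - c • oneL2 ∈ Hm := by
    intro n hn
    rw [coeff_sub, coeff_smul, coeff_Mz, coeff_oneL2]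
    rcases eq_or_lt_of_le hn with h' | h'
    · rw [← h']
      simp [hc]
    · rw [hm (n - 1) (by omega), if_neg (by omega), mul_zero, sub_zero]
  have hcomm : Mz (U.M h) = U.M (Mz h) := by
    refine Lp.ext ?_
    filter_upwards [coeFn_Mz (U.M h), U.coeFn_M h, U.coeFn_M (Mz h), coeFn_Mz h]
      with x h1 h2 h3 h4
    rw [h1, h2, h3, h4]
    ring
  have halg : Mz f - c • U.k0
      = (Mz m - c • oneL2) + (U.M (Mz h) + (c * (starRingEnd ℂ) U.a0) • U.toL2) := by
    conv_lhs => rw [hf_dec]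
    rw [map_add, hcomm, show U.k0 = oneL2 - (starRingEnd ℂ) U.a0 • U.toL2 from rfl,
      smul_sub, smul_smul]
    abel
  have hmem : Mz f - c • U.k0 ∈ U.KP := by
    rw [halg]
    exact U.KP.add_mem (U.Hm_le_KP hm')
      (U.KP.add_mem (U.uH2_le_KP ⟨Mz h, Mz_mem_H2 hh, rfl⟩)
        (U.KP.smul_mem _ (U.uH2_le_KP U.toL2_mem_uH2)))
  have hproj : (U.KP.orthogonalProjectionOnto (Mz f) : L2) = Mz f - c • U.k0 := by
    have := U.KP.eq_starProjection_of_mem_of_inner_eq_zero hmem (fun w hw => by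
      have h1 : ⟪U.k0, w⟫ = 0 := (Submodule.mem_orthogonal _ _).1 hw _ U.k0_mem_Ku
      have h2 : Mz f - (Mz f - c • U.k0) = c • U.k0 := by abel
      rw [h2, inner_smul_left, h1, mul_zero])
    exact this
  -- decompose the projection
  set b : L2 := U.M (Mz h) + (c * (starRingEnd ℂ) U.a0) • U.toL2 with hb_def
  have hbH2 : b ∈ H2 :=
    H2.add_mem (U.M_mem_H2 (Mz_mem_H2 hh)) (H2.smul_mem _ U.toL2_mem_H2)
  have hPpP : Pp (Mz f - c • U.k0) = b := by
    refine Pp_eq hbH2 ?_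
    rw [halg, add_sub_cancel_right]
    exact hm'
  have hPmP : Pm (Mz f - c • U.k0) = Mz m - c • oneL2 := by
    rw [Pm_apply, hPpP, halg, add_sub_cancel_right]
  have hMcb : U.Mc b = Mz h + (c * (starRingEnd ℂ) U.a0) • oneL2 := by
    rw [hb_def, map_add, _root_.map_smul, U.Mc_M, U.Mc_toL2]
  -- compute V of projection
  rw [hproj, U.V_apply, hPmP, hPpP, hMcb]
  -- compute Mz (V f)
  have hMcf : U.Mc (Pp f) = h := by rw [hPf, U.Mc_M]
  rw [U.V_apply, hMcf, ← hm_def, map_add, _root_.map_smul]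
  rw [smul_add, smul_smul, show ((starRingEnd ℂ) U.a0)⁻¹ * (c * (starRingEnd ℂ) U.a0) = c
    from by field_simp]
  abel

end InnerData

/-- If `u(0) ≠ 0` then `V_u D_u V_u⁻¹ = M_z`, the bilateral shift on `L²`,
where `V_u = P⁻ + (conj u / conj u(0)) P⁺` with inverse `V_u⁻¹ = P⁻ + u conj(u(0)) P⁺`;
consequently any two duals `D_u`, `D_v` with `u(0) ≠ 0 ≠ v(0)` are similar. -/
theorem Vu_similarity (U : InnerData) (h0 : U.a0 ≠ 0) :
    (∀ f : L2, f ∈ U.KP → U.Vinv (U.V f) = f) ∧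
    (∀ g : L2, U.V (U.Vinv g) = g ∧ U.Vinv g ∈ U.KP) ∧
    (∀ f : U.KP, U.V (U.Du f : L2) = Mz (U.V (f : L2))) ∧
    (∀ V' : InnerData, V'.a0 ≠ 0 →
      ∃ W : U.KP ≃L[ℂ] V'.KP, ∀ f : U.KP, W (U.Du f) = V'.Du (W f)) := by
  have hDu : ∀ (X : InnerData) (f : X.KP),
      (X.Du f : L2) = (X.KP.orthogonalProjectionOnto (Mz (f : L2)) : L2) := fun X f => rfl
  have hclaim3 : ∀ (X : InnerData), X.a0 ≠ 0 → ∀ f : X.KP,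
      X.V (X.Du f : L2) = Mz (X.V (f : L2)) := fun X hX f => by
    rw [hDu]
    exact X.claim3' hX f.2
  refine ⟨fun f hf => U.claim1 h0 hf, fun g => ⟨U.claim2a h0 g, U.claim2b g⟩,
    hclaim3 U h0, ?_⟩
  intro V' hV'
  let A : U.KP →L[ℂ] V'.KP :=
    ((V'.Vinv ∘L U.V) ∘L U.KP.subtypeL).codRestrict V'.KP
      (fun x => V'.claim2b (U.V (x : L2)))
  let B : V'.KP →L[ℂ] U.KP :=
    ((U.Vinv ∘L V'.V) ∘L V'.KP.subtypeL).codRestrict U.KP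
      (fun x => U.claim2b (V'.V (x : L2)))
  have hA : ∀ x : U.KP, (A x : L2) = V'.Vinv (U.V (x : L2)) := fun x => rfl
  have hB : ∀ x : V'.KP, (B x : L2) = U.Vinv (V'.V (x : L2)) := fun x => rfl
  have hBA : ∀ x : U.KP, B (A x) = x := fun x => by
    ext
    rw [hB, hA, V'.claim2a hV', U.claim1 h0 x.2]
  have hAB : ∀ x : V'.KP, A (B x) = x := fun x => by
    ext
    rw [hA, hB, U.claim2a h0, V'.claim1 hV' x.2]
  refine ⟨ContinuousLinearEquiv.equivOfInverse A B hBA hAB, fun f => ?_⟩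
  apply Subtype.ext
  show (A (U.Du f) : L2) = (V'.Du (A f) : L2)
  have h1 := hclaim3 V' hV' (A f)
  have h2 : (V'.Du (A f) : L2) = V'.Vinv (V'.V (V'.Du (A f) : L2)) :=
    (V'.claim1 hV' (V'.Du (A f)).2).symm
  rw [hA, hclaim3 U h0 f, h2, h1, hA, V'.claim2a hV']

end Paper
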